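/- Let C be a binary linear code of length n, let k ∈ ℕ, and let q ∈ ℂ be nonzero. Then Σ_{a ∈ C} Σ_{b ∈ 𝔽₂^k} q^{|c_{a,b}|} = Σ_{a ∈ C} q^{k·|a|} · (1 + q^{n − 2|a|})^k, where q^{n − 2|a|} denotes the integer power of the nonzero complex number q with exponent n − 2|a| ∈ ℤ. -/
import Mathlib

lemma key (n k : ℕ) (a : Fin n → ZMod 2) (q : ℂ) (hq : q ≠ 0) :
    ∑ b : Fin k → ZMod 2, q ^ hammingNorm (fun p : Fin n × Fin k => a p.1 + b p.2)
      = q ^ (k * hammingNorm a) * (1 + q ^ ((n : ℤ) - 2 * (hammingNorm a : ℤ))) ^ k := by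
  have hn : hammingNorm a ≤ n := by
    simpa using hammingNorm_le_card_fintype (x := a)
  have hz : ∀ x : ZMod 2, (x + 1 ≠ 0 ↔ x = 0) := by decide
  have h1 : hammingNorm (fun i : Fin n => a i + 1) = n - hammingNorm a := by
    unfold hammingNorm
    have : ({i | a i + 1 ≠ 0} : Finset (Fin n)) = ({i | a i ≠ 0} : Finset (Fin n))ᶜ := by
      ext i
      simp [hz]
    rw [this, Finset.card_compl]
    simp
  -- split hammingNorm over product
  have hsplit : ∀ b : Fin k → ZMod 2,
      hammingNorm (fun p : Fin n × Fin k => a p.1 + b p.2)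
        = ∑ j : Fin k, hammingNorm (fun i : Fin n => a i + b j) := by
    intro b
    unfold hammingNorm
    rw [Finset.card_filter]
    rw [Fintype.sum_prod_type]
    rw [Finset.sum_comm]
    congr 1
    ext j
    rw [Finset.card_filter]
  have step1 : ∑ b : Fin k → ZMod 2, q ^ hammingNorm (fun p : Fin n × Fin k => a p.1 + b p.2)
      = ∑ b : Fin k → ZMod 2, ∏ j : Fin k, q ^ hammingNorm (fun i : Fin n => a i + b j) := by
    refine Finset.sum_congr rfl fun b _ => ?_
    rw [hsplit b, ← Finset.prod_pow_eq_pow_sum]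
  rw [step1]
  have step2 : ∑ b : Fin k → ZMod 2, ∏ j : Fin k, q ^ hammingNorm (fun i : Fin n => a i + b j)
      = ∏ j : Fin k, ∑ x : ZMod 2, q ^ hammingNorm (fun i : Fin n => a i + x) := by
    rw [Finset.prod_univ_sum]
    rw [← Fintype.piFinset_univ]
  rw [step2]
  have hsum : ∑ x : ZMod 2, q ^ hammingNorm (fun i : Fin n => a i + x)
      = q ^ hammingNorm a + q ^ (n - hammingNorm a) := by
    rw [show (Finset.univ : Finset (ZMod 2)) = {0, 1} by decide,
      Finset.sum_insert (by decide), Finset.sum_singleton]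
    simp [h1]
  rw [hsum, Finset.prod_const, Finset.card_univ]
  have hfac : q ^ hammingNorm a + q ^ (n - hammingNorm a)
      = q ^ (hammingNorm a) * (1 + q ^ ((n : ℤ) - 2 * (hammingNorm a : ℤ))) := by
    rw [mul_add, mul_one]
    congr 1
    rw [← zpow_natCast q (hammingNorm a), ← zpow_add₀ hq, ← zpow_natCast q (n - hammingNorm a)]
    congr 1
    omega
  rw [hfac, mul_pow, ← pow_mul, Fintype.card_fin, Nat.mul_comm]


/-- The wreath sum of a binary linear code `C` with the trivial code `𝔽₂^k`:
`Σ_{a∈C} Σ_{b∈𝔽₂^k} q^{|c_{a,b}|} = Σ_{a∈C} q^{k|a|} (1 + q^{n-2|a|})^k` for nonzero `q`. -/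
theorem weightEnumerator_wreathSum_trivial (n k : ℕ)
    (C : Submodule (ZMod 2) (Fin n → ZMod 2)) (q : ℂ) (hq : q ≠ 0) :
    (∑ᶠ a ∈ (C : Set (Fin n → ZMod 2)), ∑ b : Fin k → ZMod 2,
        q ^ hammingNorm (fun p : Fin n × Fin k => a p.1 + b p.2))
      = ∑ᶠ a ∈ (C : Set (Fin n → ZMod 2)),
          q ^ (k * hammingNorm a) *
            (1 + q ^ ((n : ℤ) - 2 * (hammingNorm a : ℤ))) ^ k := by
  exact finsum_mem_congr rfl fun a _ => key n k a q hq
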